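/- Let S be a Cu-semigroup, let y be a full element of S, and let (y_n)_{n≥1} be a sequence of full elements of S with y_n ≤ y_{n+1} ≤ y for all n. Assume that F_y(S) ≠ ∅ and that lim_{n→∞} ρ(y, y_n) = 1 (the sequence (ρ(y,y_n)) is decreasing, so the limit exists). Then lim_{n→∞} rc(S, y_n) = rc(S, y). -/

import Mathlib

open scoped ENNReal

/-- `x' ≪ x`: for every increasing sequence whose supremum is `≥ x`,
some term of the sequence dominates `x'`. -/
def CuWayBelow {S : Type*} [Preorder S] (x' x : S) : Prop :=
  ∀ f : ℕ → S, Monotone f → ∀ s : S, IsLUB (Set.range f) s → x ≤ s → ∃ n, x' ≤ f n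

/-- A `Cu`-semigroup: a partially ordered abelian monoid whose least element is `0`,
satisfying the axioms (O1)–(O4). -/
class CuSemigroup (S : Type*) extends AddCommMonoid S, PartialOrder S, IsOrderedAddMonoid S where
  zero_le : ∀ x : S, 0 ≤ x
  O1 : ∀ f : ℕ → S, Monotone f → ∃ s : S, IsLUB (Set.range f) s
  O2 : ∀ x : S, ∃ f : ℕ → S, (∀ n, CuWayBelow (f n) (f (n + 1))) ∧ IsLUB (Set.range f) x
  O3 : ∀ {x' x y' y : S}, CuWayBelow x' x → CuWayBelow y' y → CuWayBelow (x' + y') (x + y)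
  O4 : ∀ f g : ℕ → S, Monotone f → Monotone g → ∀ a b : S,
      IsLUB (Set.range f) a → IsLUB (Set.range g) b →
      IsLUB (Set.range fun n => f n + g n) (a + b)

/-- A functional on a `Cu`-semigroup: a map `S → [0,∞]` which is additive, order
preserving, sends `0` to `0`, and preserves suprema of increasing sequences. -/
structure IsCuFunctional {S : Type*} [CuSemigroup S] (Λ : S → ℝ≥0∞) : Prop where
  map_zero : Λ 0 = 0
  map_add : ∀ x y : S, Λ (x + y) = Λ x + Λ y
  mono : Monotone Λ
  map_sup : ∀ f : ℕ → S, Monotone f → ∀ s : S, IsLUB (Set.range f) s → Λ s = ⨆ n, Λ (f n)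

/-- `x` is full if `∞ · x = sup_n (n • x)` is the largest element of `S`. -/
def IsFull {S : Type*} [CuSemigroup S] (x : S) : Prop :=
  ∀ s : S, IsLUB (Set.range fun n : ℕ => n • x) s → ∀ y : S, y ≤ s

/-- `F_w(S) ≠ ∅`: there exists a functional normalized at `w`. -/
def FNormNonempty {S : Type*} [CuSemigroup S] (w : S) : Prop :=
  ∃ Λ : S → ℝ≥0∞, IsCuFunctional Λ ∧ Λ w = 1

/-- The rank ratio `ρ(x, y)`: the infimum of all `r ∈ (0,∞)` with
`λ(x) ≤ r·λ(y)` for every functional `λ`; `∞` if there is no such `r`. -/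
noncomputable def rankRatio {S : Type*} [CuSemigroup S] (x y : S) : ℝ≥0∞ :=
  sInf {r : ℝ≥0∞ | 0 < r ∧ r ≠ ⊤ ∧ ∀ Λ : S → ℝ≥0∞, IsCuFunctional Λ → Λ x ≤ r * Λ y}

/-- `S` has `r`-comparison relative to `w`. -/
def HasRComparison {S : Type*} [CuSemigroup S] (r : ℝ≥0∞) (w : S) : Prop :=
  ∀ x y : S, (∀ Λ : S → ℝ≥0∞, IsCuFunctional Λ → Λ x + r * Λ w ≤ Λ y) → x ≤ y

/-- The radius of comparison of `S` relative to `w`: the infimum of all `r ∈ (0,∞)`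
for which `S` has `r`-comparison relative to `w`; `∞` if there is no such `r`. -/
noncomputable def rc {S : Type*} [CuSemigroup S] (w : S) : ℝ≥0∞ :=
  sInf {r : ℝ≥0∞ | 0 < r ∧ r ≠ ⊤ ∧ HasRComparison r w}

/-- Corollary (rclimrho1): if moreover `lim_n ρ(y, y n) = 1`, then
`lim_n rc(S, y n) = rc(S, y)`. -/
theorem stmt2 {S : Type*} [CuSemigroup S] (y : S) (ys : ℕ → S)
    (hy : IsFull y) (hys : ∀ n, IsFull (ys n))
    (hmono : ∀ n, ys n ≤ ys (n + 1)) (hle : ∀ n, ys n ≤ y)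
    (hFy : FNormNonempty y)
    (hlim : (⨅ n, rankRatio y (ys n)) = 1) :
    (⨅ n, rc (ys n)) = rc y := by
  refine le_antisymm ?_ ?_
  · -- ⨅ rc(ys n) ≤ rc y
    refine le_of_forall_gt_imp_ge_of_dense fun t ht => ?_
    rcases eq_or_ne t ⊤ with rfl | htop
    · exact le_top
    have h1 : sInf {r : ℝ≥0∞ | 0 < r ∧ r ≠ ⊤ ∧ HasRComparison r y} < t := ht
    obtain ⟨r, ⟨hr0, hrt, hrc⟩, hrlt⟩ := sInf_lt_iff.mp h1
    have h2 : (1 : ℝ≥0∞) < t / r := by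
      rw [ENNReal.lt_div_iff_mul_lt (Or.inl (ne_of_gt hr0)) (Or.inl hrt)]
      simpa using hrlt
    rw [← hlim] at h2
    obtain ⟨n, hn⟩ := iInf_lt_iff.mp h2
    obtain ⟨c, ⟨hc0, hct, hcb⟩, hclt⟩ := sInf_lt_iff.mp hn
    have hmul : c * r < t :=
      (ENNReal.lt_div_iff_mul_lt (Or.inl (ne_of_gt hr0)) (Or.inl hrt)).mp hclt
    have hkey : rc (ys n) ≤ r * c := by
      apply sInf_le
      refine ⟨ENNReal.mul_pos (ne_of_gt hr0) (ne_of_gt hc0),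
        ENNReal.mul_ne_top hrt hct, ?_⟩
      intro x z H
      apply hrc x z
      intro Λ hΛ
      calc Λ x + r * Λ y ≤ Λ x + r * (c * Λ (ys n)) := by
            gcongr
            exact hcb Λ hΛ
        _ = Λ x + r * c * Λ (ys n) := by rw [mul_assoc]
        _ ≤ Λ z := H Λ hΛ
    calc (⨅ m, rc (ys m)) ≤ rc (ys n) := iInf_le _ n
      _ ≤ r * c := hkey
      _ = c * r := mul_comm _ _
      _ ≤ t := hmul.le
  · -- rc y ≤ ⨅
    refine le_iInf fun n => sInf_le_sInf ?_
    rintro r ⟨hr0, hrt, hrc⟩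
    refine ⟨hr0, hrt, fun x z H => hrc x z fun Λ hΛ => ?_⟩
    calc Λ x + r * Λ (ys n) ≤ Λ x + r * Λ y := by
          gcongr
          exact hΛ.mono (hle n)
      _ ≤ Λ z := H Λ hΛ
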